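/- Let G be a nonempty finite simple graph and let H be a finite simple graph with γ(H) = 1. Then C^max(G∘H) = C^max(G) · |V(H)| + γ(G) · (|V(H)| − 1), where C^max denotes the maximum domination cover number over all minimum dominating sets and G∘H is the lexicographic product. -/

import Mathlib

open Finset

variable {α β : Type*}

/-- `D` is a dominating set of `G`: every vertex outside `D` has a neighbor in `D`. -/
def IsDomSet (G : SimpleGraph α) (D : Finset α) : Prop :=
  ∀ v ∉ D, ∃ u ∈ D, G.Adj u v

/-- The domination number `γ(G)`: minimum cardinality of a dominating set. -/
noncomputable def domNum (G : SimpleGraph α) : ℕ :=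
  sInf {n | ∃ D : Finset α, IsDomSet G D ∧ D.card = n}

/-- The degree of vertex `v` in `G`. -/
noncomputable def vdeg (G : SimpleGraph α) (v : α) : ℕ :=
  Nat.card (G.neighborSet v)

/-- The (domination) cover number of a set of vertices `A`: the sum of degrees. -/
noncomputable def coverNum (G : SimpleGraph α) (A : Finset α) : ℕ :=
  ∑ v ∈ A, vdeg G v

/-- `D` is a minimum dominating set (γ-set) of `G`. -/
def IsGammaSet (G : SimpleGraph α) (D : Finset α) : Prop :=
  IsDomSet G D ∧ D.card = domNum G

/-- The maximum domination cover number over all γ-sets of `G`. -/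
noncomputable def cmax (G : SimpleGraph α) : ℕ :=
  sSup {c | ∃ D : Finset α, IsGammaSet G D ∧ coverNum G D = c}

/-- The lexicographic product `G ∘ H` of two simple graphs. -/
def lexProd (G : SimpleGraph α) (H : SimpleGraph β) : SimpleGraph (α × β) where
  Adj a b := G.Adj a.1 b.1 ∨ (a.1 = b.1 ∧ H.Adj a.2 b.2)
  symm := by
    constructor
    rintro a b (h | ⟨h1, h2⟩)
    · exact Or.inl h.symm
    · exact Or.inr ⟨h1.symm, h2.symm⟩
  loopless := by
    constructor
    rintro a (h | ⟨_, h⟩)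
    · exact G.irrefl h
    · exact H.irrefl h

open scoped Classical

lemma vdeg_eq_filter [Fintype α] (G : SimpleGraph α) (v : α) :
    vdeg G v = (univ.filter (G.Adj v)).card := by
  rw [vdeg, Nat.card_coe_set_eq, Set.ncard_eq_toFinset_card']
  congr 1
  ext w
  simp

lemma vdeg_le [Fintype α] (G : SimpleGraph α) (v : α) :
    vdeg G v ≤ Fintype.card α - 1 := by
  rw [vdeg_eq_filter]
  have h : univ.filter (G.Adj v) ⊆ univ.erase v := by
    intro w hw
    simp only [mem_filter] at hw
    exact mem_erase.2 ⟨hw.2.ne', mem_univ w⟩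
  calc (univ.filter (G.Adj v)).card ≤ (univ.erase v).card := card_le_card h
    _ = Fintype.card α - 1 := by rw [card_erase_of_mem (mem_univ v), card_univ]

lemma domDomSet_nonempty [Fintype α] (G : SimpleGraph α) :
    {n | ∃ D : Finset α, IsDomSet G D ∧ D.card = n}.Nonempty :=
  ⟨(univ : Finset α).card, univ, fun v hv => absurd (mem_univ v) hv, rfl⟩

lemma exists_gammaSet [Fintype α] (G : SimpleGraph α) : ∃ D, IsGammaSet G D := by
  obtain ⟨D, hD, hc⟩ := Nat.sInf_mem (domDomSet_nonempty G)
  exact ⟨D, hD, hc⟩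

lemma domNum_le_card [Fintype α] (G : SimpleGraph α) {D : Finset α} (h : IsDomSet G D) :
    domNum G ≤ D.card :=
  Nat.sInf_le ⟨D, h, rfl⟩

lemma cmax_bddAbove [Fintype α] (G : SimpleGraph α) :
    BddAbove {c | ∃ D : Finset α, IsGammaSet G D ∧ coverNum G D = c} := by
  refine ⟨∑ v ∈ (univ : Finset α), vdeg G v, ?_⟩
  rintro c ⟨D, _, rfl⟩
  exact sum_le_sum_of_subset (subset_univ D)

lemma exists_cmax_set [Fintype α] (G : SimpleGraph α) :
    ∃ D, IsGammaSet G D ∧ coverNum G D = cmax G := by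
  obtain ⟨D, h⟩ := exists_gammaSet G
  have hne : {c | ∃ D : Finset α, IsGammaSet G D ∧ coverNum G D = c}.Nonempty :=
    ⟨coverNum G D, D, h, rfl⟩
  exact Nat.sSup_mem hne (cmax_bddAbove G)

lemma le_cmax [Fintype α] (G : SimpleGraph α) {D : Finset α} (h : IsGammaSet G D) :
    coverNum G D ≤ cmax G :=
  le_csSup (cmax_bddAbove G) ⟨D, h, rfl⟩

lemma exists_universal [Fintype β] (H : SimpleGraph β) (hH : domNum H = 1) :
    ∃ x0 : β, ∀ y, y ≠ x0 → H.Adj x0 y := by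
  have := Nat.sInf_mem (domDomSet_nonempty H)
  rw [show sInf {n | ∃ D : Finset β, IsDomSet H D ∧ D.card = n} = domNum H from rfl, hH] at this
  obtain ⟨D, hD, hc⟩ := this
  obtain ⟨x0, rfl⟩ := card_eq_one.1 hc
  refine ⟨x0, fun y hy => ?_⟩
  obtain ⟨u, hu, hadj⟩ := hD y (by simpa using hy)
  rwa [mem_singleton.1 hu] at hadj

lemma vdeg_lexProd [Fintype α] [Fintype β] (G : SimpleGraph α) (H : SimpleGraph β)
    (a : α) (y : β) :
    vdeg (lexProd G H) (a, y) = vdeg G a * Fintype.card β + vdeg H y := by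
  rw [vdeg_eq_filter]
  have hAdj : ∀ p : α × β, (lexProd G H).Adj (a, y) p ↔
      (G.Adj a p.1 ∨ (a = p.1 ∧ H.Adj y p.2)) := fun p => Iff.rfl
  calc (univ.filter ((lexProd G H).Adj (a, y))).card
      = ∑ p : α × β, if (lexProd G H).Adj (a, y) p then 1 else 0 := by
        rw [card_filter]
    _ = ∑ u : α, ∑ z : β, if (lexProd G H).Adj (a, y) (u, z) then 1 else 0 := by
        rw [Fintype.sum_prod_type]
    _ = ∑ u : α, ((if G.Adj a u then Fintype.card β else 0) +
          (if u = a then vdeg H y else 0)) := by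
        refine Finset.sum_congr rfl fun u _ => ?_
        by_cases hadj : G.Adj a u
        · have hne : u ≠ a := fun h => G.irrefl (v := a) (h ▸ hadj)
          simp only [hAdj, hadj, true_or, if_true, hne, if_false, add_zero]
          simp [card_univ]
        · by_cases hu : u = a
          · subst hu
            rw [vdeg_eq_filter, card_filter]
            simp [hAdj, hadj]
          · simp only [hAdj, hadj, false_or]
            have : ∀ z : β, ¬ (a = u ∧ H.Adj y z) := fun z h => hu h.1.symm
            simp [this, hu]
    _ = vdeg G a * Fintype.card β + vdeg H y := by
        rw [Finset.sum_add_distrib, Finset.sum_ite_eq' univ a (fun _ => vdeg H y),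
          ← Finset.sum_filter, Finset.sum_const, smul_eq_mul, vdeg_eq_filter G a]
        simp

lemma vdeg_universal [Fintype β] (H : SimpleGraph β) {x0 : β}
    (hx0 : ∀ y, y ≠ x0 → H.Adj x0 y) : vdeg H x0 = Fintype.card β - 1 := by
  rw [vdeg_eq_filter]
  have h : univ.filter (H.Adj x0) = univ.erase x0 := by
    ext z
    simp only [mem_filter, mem_erase, mem_univ, true_and, and_true]
    exact ⟨fun h => h.ne', fun h => hx0 z h⟩
  rw [h, card_erase_of_mem (mem_univ _), card_univ]

lemma proj_dom [Nonempty β] (G : SimpleGraph α) (H : SimpleGraph β) {D : Finset (α × β)}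
    (hD : IsDomSet (lexProd G H) D) : IsDomSet G (D.image Prod.fst) := by
  intro v hv
  obtain ⟨y⟩ := ‹Nonempty β›
  have hvy : (v, y) ∉ D := fun h => hv (mem_image.2 ⟨_, h, rfl⟩)
  obtain ⟨u, hu, hadj⟩ := hD _ hvy
  rcases hadj with h | ⟨h1, _⟩
  · exact ⟨u.1, mem_image.2 ⟨u, hu, rfl⟩, h⟩
  · exact absurd (mem_image.2 ⟨u, hu, h1⟩) hv

lemma lift_dom (G : SimpleGraph α) (H : SimpleGraph β) {x0 : β}
    (hx0 : ∀ y, y ≠ x0 → H.Adj x0 y) {D' : Finset α} (hD' : IsDomSet G D') :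
    IsDomSet (lexProd G H) (D'.image (fun a => (a, x0))) := by
  rintro ⟨a, y⟩ hv
  by_cases ha : a ∈ D'
  · have hy : y ≠ x0 := fun h => hv (mem_image.2 ⟨a, ha, by rw [h]⟩)
    exact ⟨(a, x0), mem_image.2 ⟨a, ha, rfl⟩, Or.inr ⟨rfl, hx0 y hy⟩⟩
  · obtain ⟨u, hu, hadj⟩ := hD' a ha
    exact ⟨(u, x0), mem_image.2 ⟨u, hu, rfl⟩, Or.inl hadj⟩

lemma domNum_lexProd [Fintype α] [Fintype β] (G : SimpleGraph α) (H : SimpleGraph β)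
    {x0 : β} (hx0 : ∀ y, y ≠ x0 → H.Adj x0 y) :
    domNum (lexProd G H) = domNum G := by
  have : Nonempty β := ⟨x0⟩
  apply le_antisymm
  · obtain ⟨D', hD'⟩ := exists_gammaSet G
    calc domNum (lexProd G H) ≤ (D'.image (fun a => (a, x0))).card :=
          domNum_le_card _ (lift_dom G H hx0 hD'.1)
      _ ≤ D'.card := card_image_le
      _ = domNum G := hD'.2
  · obtain ⟨D, hD⟩ := exists_gammaSet (lexProd G H)
    calc domNum G ≤ (D.image Prod.fst).card := domNum_le_card _ (proj_dom G H hD.1)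
      _ ≤ D.card := card_image_le
      _ = domNum (lexProd G H) := hD.2

/-- If `G` is a nonempty finite graph and `γ(H) = 1`, then
`C^max(G ∘ H) = C^max(G) · |V(H)| + γ(G) · (|V(H)| − 1)`. -/
theorem lexProd_cmax_of_domNum_eq_one [Fintype α] [Fintype β] [Nonempty α]
    (G : SimpleGraph α) (H : SimpleGraph β) (hH : domNum H = 1) :
    cmax (lexProd G H) = cmax G * Fintype.card β + domNum G * (Fintype.card β - 1) := by
  obtain ⟨x0, hx0⟩ := exists_universal H hH
  have hβ : Nonempty β := ⟨x0⟩
  have hdomeq : domNum (lexProd G H) = domNum G := domNum_lexProd G H hx0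
  apply le_antisymm
  · -- upper bound
    obtain ⟨D, hD, hcov⟩ := exists_cmax_set (lexProd G H)
    rw [← hcov]
    have hproj : IsDomSet G (D.image Prod.fst) := proj_dom G H hD.1
    have hcard' : (D.image Prod.fst).card = domNum G := by
      refine le_antisymm ?_ (domNum_le_card G hproj)
      calc (D.image Prod.fst).card ≤ D.card := card_image_le
        _ = domNum G := hD.2.trans hdomeq
    have hgam : IsGammaSet G (D.image Prod.fst) := ⟨hproj, hcard'⟩
    have hinj : Set.InjOn Prod.fst (D : Set (α × β)) := by
      rw [← Finset.card_image_iff]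
      rw [hcard', hD.2.trans hdomeq]
    have h1 : coverNum (lexProd G H) D =
        ∑ p ∈ D, (vdeg G p.1 * Fintype.card β + vdeg H p.2) := by
      refine Finset.sum_congr rfl fun p _ => ?_
      obtain ⟨a, y⟩ := p
      exact vdeg_lexProd G H a y
    have h2 : ∑ p ∈ D, vdeg G p.1 * Fintype.card β =
        coverNum G (D.image Prod.fst) * Fintype.card β := by
      rw [coverNum, Finset.sum_image (fun x hx y hy h => hinj hx hy h), Finset.sum_mul]
    have h3 : ∑ p ∈ D, vdeg H p.2 ≤ domNum G * (Fintype.card β - 1) := by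
      calc ∑ p ∈ D, vdeg H p.2 ≤ ∑ _p ∈ D, (Fintype.card β - 1) :=
            Finset.sum_le_sum fun p _ => vdeg_le H p.2
        _ = D.card * (Fintype.card β - 1) := by rw [Finset.sum_const, smul_eq_mul]
        _ = domNum G * (Fintype.card β - 1) := by rw [hD.2.trans hdomeq]
    calc coverNum (lexProd G H) D
        = coverNum G (D.image Prod.fst) * Fintype.card β + ∑ p ∈ D, vdeg H p.2 := by
          rw [h1, Finset.sum_add_distrib, h2]
      _ ≤ cmax G * Fintype.card β + domNum G * (Fintype.card β - 1) :=
          add_le_add (Nat.mul_le_mul_right _ (le_cmax G hgam)) h3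
  · -- lower bound
    obtain ⟨D', hD', hcov⟩ := exists_cmax_set G
    have hinj : Function.Injective (fun a : α => (a, x0)) := fun a b h =>
      congrArg Prod.fst h
    have hdom : IsDomSet (lexProd G H) (D'.image (fun a => (a, x0))) :=
      lift_dom G H hx0 hD'.1
    have hgam : IsGammaSet (lexProd G H) (D'.image (fun a => (a, x0))) :=
      ⟨hdom, by rw [card_image_of_injective _ hinj, hD'.2, hdomeq]⟩
    have hc : coverNum (lexProd G H) (D'.image (fun a => (a, x0))) =
        cmax G * Fintype.card β + domNum G * (Fintype.card β - 1) := by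
      rw [coverNum, Finset.sum_image (fun x _ y _ h => hinj h)]
      have h4 : ∀ a ∈ D', vdeg (lexProd G H) (a, x0) =
          vdeg G a * Fintype.card β + (Fintype.card β - 1) := fun a _ => by
        rw [vdeg_lexProd, vdeg_universal H hx0]
      rw [Finset.sum_congr rfl h4, Finset.sum_add_distrib, ← Finset.sum_mul,
        Finset.sum_const, smul_eq_mul]
      rw [show ∑ a ∈ D', vdeg G a = coverNum G D' from rfl, hcov, hD'.2]
    rw [← hc]
    exact le_cmax (lexProd G H) hgam
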